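/- Let K be a group and let (ρ, E) be a finite-dimensional irreducible complex representation of K equipped with a K-invariant inner product ⟨·,·⟩_E (so ⟨ρ(k)x, ρ(k)y⟩_E = ⟨x,y⟩_E for all k ∈ K). Let M be a complex vector space and let B be a sesquilinear form on M ⊗_ℂ E that is invariant under the action of K by id_M ⊗ ρ, i.e., B((id⊗ρ(k))u, (id⊗ρ(k))u') = B(u,u') for all k ∈ K. Then there exists a unique sesquilinear form s on M such that B(m ⊗ x, m' ⊗ x') = s(m, m')·⟨x, x'⟩_E for all m, m' ∈ M and x, x' ∈ E. Moreover, if B is hermitian, then s is hermitian. -/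

import Mathlib

open TensorProduct

/-- Schur-type lemma: a `K`-invariant sesquilinear form on an irreducible unitary
representation is a scalar multiple of the inner product. -/
lemma schur_sesq_form {K : Type*} [Group K]
    {E : Type*} [NormedAddCommGroup E] [InnerProductSpace ℂ E] [FiniteDimensional ℂ E]
    (ρ : Representation ℂ K E)
    (hρ_unitary : ∀ (k : K) (x y : E), (inner ℂ (ρ k x) (ρ k y) : ℂ) = inner ℂ x y)
    (hρ_nontriv : Nontrivial E)
    (hρ_irred : ∀ U : Submodule ℂ E, (∀ (k : K), ∀ x ∈ U, ρ k x ∈ U) → U = ⊥ ∨ U = ⊤)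
    (F : E → E → ℂ)
    (hF_add_left : ∀ x x' y, F (x + x') y = F x y + F x' y)
    (hF_smul_left : ∀ (c : ℂ) x y, F (c • x) y = starRingEnd ℂ c * F x y)
    (hF_add_right : ∀ x y y', F x (y + y') = F x y + F x y')
    (hF_smul_right : ∀ (c : ℂ) x y, F x (c • y) = c * F x y)
    (hF_inv : ∀ (k : K) (x y : E), F (ρ k x) (ρ k y) = F x y) :
    ∃ c : ℂ, ∀ x y : E, F x y = c * (inner ℂ x y : ℂ) := by
  -- Build the linear operator `T` with `⟪T x, y⟫ = F x y`.
  have hT : ∀ x : E, ∃ z : E, ∀ y, (inner ℂ z y : ℂ) = F x y := by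
    intro x
    let f : E →ₗ[ℂ] ℂ :=
      { toFun := F x
        map_add' := fun y y' => hF_add_right x y y'
        map_smul' := fun c y => hF_smul_right c x y }
    refine ⟨(InnerProductSpace.toDual ℂ E).symm (LinearMap.toContinuousLinearMap f), ?_⟩
    intro y
    rw [InnerProductSpace.toDual_symm_apply]
    rfl
  choose T hTspec using hT
  have hTadd : ∀ x x', T (x + x') = T x + T x' := by
    intro x x'
    apply ext_inner_right ℂ
    intro y
    rw [inner_add_left, hTspec, hTspec, hTspec, hF_add_left]
  have hTsmul : ∀ (c : ℂ) x, T (c • x) = c • T x := by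
    intro c x
    apply ext_inner_right ℂ
    intro y
    rw [inner_smul_left, hTspec, hTspec, hF_smul_left]
  let Tl : Module.End ℂ E :=
    { toFun := T
      map_add' := hTadd
      map_smul' := hTsmul }
  -- `T` commutes with the representation.
  have hcomm : ∀ (k : K) (x : E), T (ρ k x) = ρ k (T x) := by
    intro k x
    apply ext_inner_right ℂ
    intro y
    have hy : (ρ k) ((ρ k⁻¹) y) = y := by
      have h1 : ρ k * ρ k⁻¹ = 1 := by rw [← map_mul, mul_inv_cancel, map_one]
      calc (ρ k) ((ρ k⁻¹) y) = (ρ k * ρ k⁻¹) y := rfl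
        _ = y := by rw [h1, Module.End.one_apply]
    conv_lhs => rw [← hy]
    conv_rhs => rw [← hy]
    rw [hTspec, hF_inv, hρ_unitary, hTspec]
  -- Eigenvalue of `T`.
  obtain ⟨c, hc⟩ := Module.End.exists_eigenvalue Tl
  have hinvsub : ∀ (k : K), ∀ x ∈ Module.End.eigenspace Tl c, ρ k x ∈ Module.End.eigenspace Tl c := by
    intro k x hx
    rw [Module.End.mem_eigenspace_iff] at hx ⊢
    show T (ρ k x) = c • ρ k x
    rw [hcomm, show T x = Tl x from rfl, hx, map_smul]
  have heig : Module.End.eigenspace Tl c = ⊤ := by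
    rcases hρ_irred (Module.End.eigenspace Tl c) hinvsub with h | h
    · exact absurd h hc
    · exact h
  have hTx : ∀ x : E, T x = c • x := by
    intro x
    have : x ∈ Module.End.eigenspace Tl c := heig ▸ Submodule.mem_top
    exact Module.End.mem_eigenspace_iff.mp this
  refine ⟨starRingEnd ℂ c, fun x y => ?_⟩
  rw [← hTspec, hTx, inner_smul_left]

/-- Let `(ρ, E)` be a finite-dimensional irreducible unitary representation of a group `K`,
`M` a complex vector space, and `B` a sesquilinear form on `M ⊗ E` invariant under
`id ⊗ ρ(k)` for all `k`. Then there is a unique sesquilinear form `s` on `M` with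
`B (m ⊗ x) (m' ⊗ x') = s m m' * ⟪x, x'⟫`; moreover if `B` is hermitian then so is `s`. -/
theorem isotypic_form_factorization {K : Type*} [Group K]
    {E : Type*} [NormedAddCommGroup E] [InnerProductSpace ℂ E] [FiniteDimensional ℂ E]
    (ρ : Representation ℂ K E)
    (hρ_unitary : ∀ (k : K) (x y : E), (inner ℂ (ρ k x) (ρ k y) : ℂ) = inner ℂ x y)
    (hρ_nontriv : Nontrivial E)
    (hρ_irred : ∀ U : Submodule ℂ E, (∀ (k : K), ∀ x ∈ U, ρ k x ∈ U) → U = ⊥ ∨ U = ⊤)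
    {M : Type*} [AddCommGroup M] [Module ℂ M]
    (B : (M ⊗[ℂ] E) → (M ⊗[ℂ] E) → ℂ)
    (hB_add_left : ∀ u u' w, B (u + u') w = B u w + B u' w)
    (hB_smul_left : ∀ (c : ℂ) u w, B (c • u) w = starRingEnd ℂ c * B u w)
    (hB_add_right : ∀ u w w', B u (w + w') = B u w + B u w')
    (hB_smul_right : ∀ (c : ℂ) u w, B u (c • w) = c * B u w)
    (hB_K_invariant : ∀ (k : K) (u u' : M ⊗[ℂ] E),
      B (TensorProduct.map LinearMap.id (ρ k) u) (TensorProduct.map LinearMap.id (ρ k) u')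
        = B u u') :
    (∃! s : M →ₛₗ[starRingEnd ℂ] M →ₗ[ℂ] ℂ,
      ∀ (m m' : M) (x x' : E),
        B (m ⊗ₜ[ℂ] x) (m' ⊗ₜ[ℂ] x') = s m m' * (inner ℂ x x' : ℂ)) ∧
    ((∀ u u', B u' u = starRingEnd ℂ (B u u')) →
      ∀ s : M →ₛₗ[starRingEnd ℂ] M →ₗ[ℂ] ℂ,
        (∀ (m m' : M) (x x' : E),
          B (m ⊗ₜ[ℂ] x) (m' ⊗ₜ[ℂ] x') = s m m' * (inner ℂ x x' : ℂ)) →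
        ∀ m m' : M, s m' m = starRingEnd ℂ (s m m')) := by
  -- A unit vector in `E`.
  obtain ⟨x₀, hx₀⟩ := exists_norm_eq E (zero_le_one)
  have hx₀i : (inner ℂ x₀ x₀ : ℂ) = 1 := by
    rw [inner_self_eq_norm_sq_to_K, hx₀]
    norm_num
  -- The candidate sesquilinear form.
  let s : M →ₛₗ[starRingEnd ℂ] M →ₗ[ℂ] ℂ :=
    LinearMap.mk₂'ₛₗ (starRingEnd ℂ) (RingHom.id ℂ) (fun m m' => B (m ⊗ₜ[ℂ] x₀) (m' ⊗ₜ[ℂ] x₀))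
      (fun m m₁ m' => by beta_reduce; rw [add_tmul, hB_add_left])
      (fun c m m' => by
        beta_reduce; simp only [smul_eq_mul]; rw [← smul_tmul', hB_smul_left])
      (fun m m' m₁ => by beta_reduce; rw [add_tmul, hB_add_right])
      (fun c m m' => by
        beta_reduce; simp only [RingHom.id_apply, smul_eq_mul]
        rw [← smul_tmul', hB_smul_right])
  -- The factorization property for `s`.
  have hfact : ∀ (m m' : M) (x x' : E),
      B (m ⊗ₜ[ℂ] x) (m' ⊗ₜ[ℂ] x') = s m m' * (inner ℂ x x' : ℂ) := by
    intro m m' x x'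
    obtain ⟨c, hc⟩ := schur_sesq_form ρ hρ_unitary hρ_nontriv hρ_irred
      (fun x y => B (m ⊗ₜ[ℂ] x) (m' ⊗ₜ[ℂ] y))
      (fun x x' y => by beta_reduce; rw [tmul_add, hB_add_left])
      (fun c x y => by beta_reduce; rw [tmul_smul, hB_smul_left])
      (fun x y y' => by beta_reduce; rw [tmul_add, hB_add_right])
      (fun c x y => by beta_reduce; rw [tmul_smul, hB_smul_right])
      (fun k x y => by
        have := hB_K_invariant k (m ⊗ₜ[ℂ] x) (m' ⊗ₜ[ℂ] y)
        simpa using this)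
    have hs : s m m' = c := by
      show B (m ⊗ₜ[ℂ] x₀) (m' ⊗ₜ[ℂ] x₀) = c
      rw [hc x₀ x₀, hx₀i, mul_one]
    rw [hc x x', hs]
  refine ⟨⟨s, hfact, ?_⟩, ?_⟩
  · -- uniqueness
    intro s' hs'
    ext m m'
    have h1 := hs' m m' x₀ x₀
    have h2 := hfact m m' x₀ x₀
    rw [hx₀i, mul_one] at h1 h2
    exact h1.symm.trans h2
  · -- hermitian
    intro hherm s' hs' m m'
    have h1 := hs' m' m x₀ x₀
    have h2 := hs' m m' x₀ x₀
    rw [hx₀i, mul_one] at h1 h2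
    rw [← h1, ← h2, hherm]
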